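/- For every n ≥ 0, r̃_{Ψ,n}, viewed as a polynomial in x with coefficients in B ⊗ ℚ, has degree exactly 2gn + m in x, and its leading coefficient equals 2^{n−1} · b_m · C_{2g+2m+1,n}. -/

import Mathlib

open Polynomial

noncomputable section

/-- Index set for the variables pᵢ, qᵢ, bᵢ. -/
abbrev VarsB (g m : ℕ) := (Fin (2*g+1) ⊕ Fin (g+1)) ⊕ Fin (m+1)

/-- B = Λ[b₀,…,b_m] = ℤ[p₀,…,p_{2g},q₀,…,q_g,b₀,…,b_m]. -/
abbrev BRing (g m : ℕ) := MvPolynomial (VarsB g m) ℤ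

/-- B ⊗ ℚ. -/
abbrev BQ (g m : ℕ) := MvPolynomial (VarsB g m) ℚ

/-- 𝗉(x) ∈ B[x]. -/
def pB (g m : ℕ) : Polynomial (BRing g m) :=
  X ^ (2*g+1) + ∑ i : Fin (2*g+1), C (MvPolynomial.X (Sum.inl (Sum.inl i))) * X ^ (i : ℕ)

/-- 𝗊(x) ∈ B[x]. -/
def qB (g m : ℕ) : Polynomial (BRing g m) :=
  ∑ i : Fin (g+1), C (MvPolynomial.X (Sum.inl (Sum.inr i))) * X ^ (i : ℕ)

/-- Ψ(x) = b₀ + b₁x + ⋯ + b_mx^m ∈ B[x]. -/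
def PsiB (g m : ℕ) : Polynomial (BRing g m) :=
  ∑ i : Fin (m+1), C (MvPolynomial.X (Sum.inr i)) * X ^ (i : ℕ)

/-- 𝗉(x) ∈ (B⊗ℚ)[x]. -/
def pBQ (g m : ℕ) : Polynomial (BQ g m) :=
  X ^ (2*g+1) + ∑ i : Fin (2*g+1), C (MvPolynomial.X (Sum.inl (Sum.inl i))) * X ^ (i : ℕ)

/-- 𝗊(x) ∈ (B⊗ℚ)[x]. -/
def qBQ (g m : ℕ) : Polynomial (BQ g m) :=
  ∑ i : Fin (g+1), C (MvPolynomial.X (Sum.inl (Sum.inr i))) * X ^ (i : ℕ)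

/-- 𝖿(x) = 𝗉(x) + 𝗊(x)²/4 ∈ (B⊗ℚ)[x]. -/
def fBQ (g m : ℕ) : Polynomial (BQ g m) :=
  pBQ g m + C (MvPolynomial.C ((4:ℚ)⁻¹)) * qBQ g m ^ 2

/-- The evaluation map (B⊗ℚ)[x] → L extending φ : B[x] → L. -/
def psiB (g m : ℕ) (L : Type) [Field L] [CharZero L]
    (φ : Polynomial (BRing g m) →+* L) : Polynomial (BQ g m) →+* L :=
  Polynomial.eval₂RingHom
    (MvPolynomial.eval₂Hom (Rat.castHom L)
      (fun v => φ (Polynomial.C (MvPolynomial.X v)))) (φ Polynomial.X)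

/-- r̃_{Ψ,n} = (2z)^{2n−1}·D₁ⁿ(Ψ(x)z) ∈ L, where z = y + 𝗊(x)/2. -/
def rtB (g m : ℕ) (L : Type) [Field L]
    (φ : Polynomial (BRing g m) →+* L) (y : L) (D : L → L) (n : ℕ) : L :=
  (2 * (y + φ (qB g m) / 2)) ^ (2*(n:ℤ) - 1)
    * D^[n] (φ (PsiB g m) * (y + φ (qB g m) / 2))

/-- C_{m,n} = ∏_{r=0}^{n−1} (m − 2r). -/
def CcB (m : ℤ) (n : ℕ) : ℤ := ∏ r ∈ Finset.range n, (m - 2*(r : ℤ))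


namespace Stmt16Aux

open Polynomial

/-- coefficient inclusion B → B⊗ℚ -/
def ι (g m : ℕ) : BRing g m →+* BQ g m := MvPolynomial.map (Int.castRingHom ℚ)

/-- B[x] → (B⊗ℚ)[x] -/
def toQ (g m : ℕ) : Polynomial (BRing g m) →+* Polynomial (BQ g m) :=
  Polynomial.mapRingHom (ι g m)

lemma toQ_pB (g m : ℕ) : toQ g m (pB g m) = pBQ g m := by
  simp [toQ, pB, pBQ, ι, Polynomial.map_sum]

lemma toQ_qB (g m : ℕ) : toQ g m (qB g m) = qBQ g m := by
  simp [toQ, qB, qBQ, ι, Polynomial.map_sum]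

lemma toQ_PsiB (g m : ℕ) :
    toQ g m (PsiB g m)
      = ∑ i : Fin (m+1), C (MvPolynomial.X (Sum.inr i)) * X ^ (i : ℕ) := by
  simp [toQ, PsiB, ι, Polynomial.map_sum]

variable {L : Type} [Field L] [CharZero L]

lemma psiB_toQ (g m : ℕ) (φ : Polynomial (BRing g m) →+* L) (Q : Polynomial (BRing g m)) :
    psiB g m L φ (toQ g m Q) = φ Q := by
  have : (psiB g m L φ).comp (toQ g m) = φ := by
    apply Polynomial.ringHom_ext
    · intro a
      show psiB g m L φ (toQ g m (C a)) = φ (C a)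
      have h2 : ((MvPolynomial.eval₂Hom (Rat.castHom L)
          (fun v => φ (Polynomial.C (MvPolynomial.X v)))).comp (ι g m))
          = φ.comp (Polynomial.C : BRing g m →+* Polynomial (BRing g m)) := by
        apply MvPolynomial.ringHom_ext
        · intro r
          simp [ι]
        · intro v
          simp [ι]
      have := RingHom.congr_fun h2 a
      simpa [psiB, toQ] using this
    · show psiB g m L φ (toQ g m X) = φ X
      simp [psiB, toQ]
  exact RingHom.congr_fun this Q

lemma psiB_CC (g m : ℕ) (φ : Polynomial (BRing g m) →+* L) (r : ℚ) :
    psiB g m L φ (C (MvPolynomial.C r)) = (r : L) := by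
  simp [psiB]

lemma psiB_X (g m : ℕ) (φ : Polynomial (BRing g m) →+* L) :
    psiB g m L φ X = φ X := by
  simp [psiB]


lemma denom_mv {σ : Type*} (a : MvPolynomial σ ℚ) :
    ∃ d : ℤ, d ≠ 0 ∧ ∃ b : MvPolynomial σ ℤ,
      MvPolynomial.C (d : ℚ) * a = MvPolynomial.map (Int.castRingHom ℚ) b := by
  induction a using MvPolynomial.induction_on with
  | C q =>
    refine ⟨(q.den : ℤ), by exact_mod_cast q.den_ne_zero, MvPolynomial.C q.num, ?_⟩
    rw [← map_mul, MvPolynomial.map_C]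
    congr 1
    rw [mul_comm]
    exact_mod_cast Rat.mul_den_eq_num q
  | add p q hp hq =>
    obtain ⟨d1, hd1, b1, hb1⟩ := hp
    obtain ⟨d2, hd2, b2, hb2⟩ := hq
    refine ⟨d1 * d2, mul_ne_zero hd1 hd2,
      MvPolynomial.C d2 * b1 + MvPolynomial.C d1 * b2, ?_⟩
    rw [map_add, map_mul, map_mul, MvPolynomial.map_C, MvPolynomial.map_C, ← hb1, ← hb2]
    simp only [Int.coe_castRingHom]
    push_cast [map_mul]
    ring
  | mul_X p i hp =>
    obtain ⟨d, hd, b, hb⟩ := hp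
    refine ⟨d, hd, b * MvPolynomial.X i, ?_⟩
    rw [map_mul, MvPolynomial.map_X, ← hb, mul_assoc]

lemma denom_poly (g m : ℕ) (P : Polynomial (BQ g m)) :
    ∃ d : ℤ, d ≠ 0 ∧ ∃ Q : Polynomial (BRing g m),
      C (MvPolynomial.C (d : ℚ)) * P = toQ g m Q := by
  induction P using Polynomial.induction_on with
  | C a =>
    obtain ⟨d, hd, b, hb⟩ := denom_mv a
    exact ⟨d, hd, C b, by rw [← Polynomial.C_mul, hb]; simp [toQ, ι]⟩
  | add p q hp hq =>
    obtain ⟨d1, hd1, Q1, hQ1⟩ := hp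
    obtain ⟨d2, hd2, Q2, hQ2⟩ := hq
    refine ⟨d1 * d2, mul_ne_zero hd1 hd2, C (MvPolynomial.C d2) * Q1 + C (MvPolynomial.C d1) * Q2, ?_⟩
    rw [map_add, map_mul, map_mul]
    have e1 : toQ g m (C (MvPolynomial.C d2)) = C (MvPolynomial.C (d2 : ℚ)) := by
      simp [toQ, ι]
    have e2 : toQ g m (C (MvPolynomial.C d1)) = C (MvPolynomial.C (d1 : ℚ)) := by
      simp [toQ, ι]
    rw [e1, e2, ← hQ1, ← hQ2]
    push_cast [map_mul]
    ring
  | monomial n a ih =>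
    obtain ⟨d, hd, b, hb⟩ := denom_mv a
    refine ⟨d, hd, C b * X ^ (n+1), ?_⟩
    rw [map_mul, map_pow]
    have e1 : toQ g m (C b) = C (MvPolynomial.map (Int.castRingHom ℚ) b) := by
      simp [toQ, ι]
    have e2 : toQ g m X = X := by simp [toQ]
    rw [e1, e2, ← hb]
    rw [← mul_assoc, ← Polynomial.C_mul]

lemma psiB_inj (g m : ℕ) (φ : Polynomial (BRing g m) →+* L)
    (hinj : Function.Injective φ) : Function.Injective (psiB g m L φ) := by
  intro P1 P2 h
  have h0 : psiB g m L φ (P1 - P2) = 0 := by rw [map_sub, h, sub_self]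
  obtain ⟨d, hd, Q, hQ⟩ := denom_poly g m (P1 - P2)
  have hφQ : φ Q = 0 := by
    rw [← psiB_toQ g m φ, ← hQ, map_mul, h0, mul_zero]
  have hQ0 : Q = 0 := hinj (by rw [hφQ, map_zero])
  rw [hQ0, map_zero, mul_eq_zero] at hQ
  rcases hQ with hc | hP
  · exfalso
    have : (MvPolynomial.C (d : ℚ) : BQ g m) = 0 := by
      exact_mod_cast Polynomial.C_eq_zero.mp hc
    simp only [MvPolynomial.C_eq_zero] at this
    exact hd (by exact_mod_cast this)
  · exact sub_eq_zero.mp hP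


section Deriv

variable {L : Type} [Field L] [CharZero L] (D : L → L)
  (hDadd : ∀ a b : L, D (a + b) = D a + D b)
  (hDmul : ∀ a b : L, D (a * b) = a * D b + D a * b)

set_option linter.unusedSectionVars false

include hDmul in
lemma D_one : D 1 = 0 := by
  have h := hDmul 1 1
  simp only [mul_one, one_mul] at h
  exact left_eq_add.mp h

include hDadd in
lemma D_zero : D 0 = 0 := by
  have h := hDadd 0 0
  rw [add_zero] at h
  exact (left_eq_add.mp h)

include hDadd hDmul in
lemma D_neg (a : L) : D (-a) = - D a := by
  have h := hDadd a (-a)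
  rw [add_neg_cancel, D_zero D hDadd] at h
  exact (neg_eq_of_add_eq_zero_right h.symm).symm

include hDmul in
lemma D_pow (a : L) (k : ℕ) : D (a ^ (k+1)) = (k+1) * a ^ k * D a := by
  induction k with
  | zero => simp
  | succ k ih =>
    rw [pow_succ, hDmul, ih]
    push_cast
    ring

include hDadd hDmul in
lemma D_nat (k : ℕ) : D (k : L) = 0 := by
  induction k with
  | zero => simpa using D_zero D hDadd
  | succ k ih =>
    push_cast
    rw [hDadd, ih, D_one D hDmul, add_zero]

include hDadd hDmul in
lemma D_int (k : ℤ) : D (k : L) = 0 := by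
  rcases k with k | k
  · simpa using D_nat D hDadd hDmul k
  · rw [Int.cast_negSucc, D_neg D hDadd hDmul, D_nat D hDadd hDmul]
    simp

include hDadd hDmul in
lemma D_rat (q : ℚ) : D (q : L) = 0 := by
  have hden : ((q.den : L)) ≠ 0 := Nat.cast_ne_zero.mpr q.den_ne_zero
  have hq : (q : L) = (q.num : L) * ((q.den : L))⁻¹ := by
    rw [Rat.cast_def, div_eq_mul_inv]
  have h1 := hDmul ((q.den : L)) ((q.den : L))⁻¹
  rw [mul_inv_cancel₀ hden, D_one D hDmul, D_nat D hDadd hDmul] at h1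
  rw [zero_mul, add_zero] at h1
  have hinv : D (((q.den : L))⁻¹) = 0 := by
    rcases mul_eq_zero.mp h1.symm with h | h
    · exact absurd h hden
    · exact h
  rw [hq, hDmul, hinv, D_int D hDadd hDmul]
  ring

include hDadd hDmul in
lemma D_inv (a : L) (ha : a ≠ 0) : D (a⁻¹) = - D a / a ^ 2 := by
  have h1 := hDmul a a⁻¹
  rw [mul_inv_cancel₀ ha, D_one D hDmul] at h1
  have h2 : a * D a⁻¹ = -(D a * a⁻¹) := add_eq_zero_iff_eq_neg.mp h1.symm
  rw [eq_comm, div_eq_iff (pow_ne_zero 2 ha), eq_comm]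
  calc D a⁻¹ * a ^ 2 = (a * D a⁻¹) * a := by ring
    _ = -(D a * a⁻¹) * a := by rw [h2]
    _ = - D a * (a⁻¹ * a) := by ring
    _ = - D a := by rw [inv_mul_cancel₀ ha, mul_one]

include hDadd hDmul in
lemma D_zpow (a : L) (ha : a ≠ 0) (k : ℤ) : D (a ^ k) = k * a ^ (k - 1) * D a := by
  rcases k with k | k
  · simp only [Int.ofNat_eq_coe]
    cases k with
    | zero => simp [D_one D hDmul]
    | succ k =>
      rw [zpow_natCast, D_pow D hDmul]
      have hz : a ^ ((((k+1:ℕ)):ℤ) - 1) = a ^ k := by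
        rw [show ((((k+1:ℕ)):ℤ) - 1) = ((k:ℕ):ℤ) by push_cast; ring, zpow_natCast]
      rw [hz]
      push_cast
      ring
  · rw [zpow_negSucc, D_inv D hDadd hDmul _ (pow_ne_zero _ ha), D_pow D hDmul]
    have hz : a ^ ((Int.negSucc k) - 1) = ((a ^ (k+1+1))⁻¹ : L) := by
      rw [show ((Int.negSucc k) - 1) = -(((k+1+1:ℕ)):ℤ) by rw [Int.negSucc_eq]; push_cast; ring]
      rw [zpow_neg, zpow_natCast]
    rw [hz, Int.negSucc_eq]
    have h1 : a ^ (k+1) ≠ 0 := pow_ne_zero _ ha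
    have h2 : a ^ (k+1+1) ≠ 0 := pow_ne_zero _ ha
    field_simp
    push_cast
    ring

end Deriv

/-- the polynomial S n with r̃_n = ψ(S n) -/
def S (g m : ℕ) : ℕ → Polynomial (BQ g m)
  | 0 => C (MvPolynomial.C (2⁻¹ : ℚ)) * toQ g m (PsiB g m)
  | (n+1) => C (MvPolynomial.C (4 : ℚ)) * fBQ g m * derivative (S g m n)
      + C (MvPolynomial.C ((2 : ℚ) * (1 - 2*(n:ℚ)))) * derivative (fBQ g m) * S g m n

section Main

variable {g m : ℕ} {L : Type} [Field L] [CharZero L]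
  (φ : Polynomial (BRing g m) →+* L) (y : L) (D : L → L)
  (hy : y ^ 2 + φ (qB g m) * y = φ (pB g m))
  (hind : ∀ u v : Polynomial (BRing g m), φ v * y = φ u → v = 0)
  (hDadd : ∀ a b : L, D (a + b) = D a + D b)
  (hDmul : ∀ a b : L, D (a * b) = a * D b + D a * b)
  (hDx : D (φ X) = 1)
  (hDc : ∀ c : BRing g m, D (φ (C c)) = 0)

set_option linter.unusedSectionVars false

include hDadd hDmul hDc in
lemma D_const (a : BQ g m) : D (psiB g m L φ (C a)) = 0 := by
  induction a using MvPolynomial.induction_on with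
  | C q => rw [psiB_CC]; exact D_rat D hDadd hDmul q
  | add p q hp hq => rw [map_add, map_add, hDadd, hp, hq, add_zero]
  | mul_X p i hp =>
    have hX : psiB g m L φ (C (MvPolynomial.X i)) = φ (C (MvPolynomial.X i)) := by
      simp [psiB]
    rw [map_mul, map_mul, hDmul, hX, hDc, hp, mul_zero, zero_mul, add_zero]

include hDadd hDmul hDx hDc in
lemma D_psiB (P : Polynomial (BQ g m)) :
    D (psiB g m L φ P) = psiB g m L φ (derivative P) := by
  induction P using Polynomial.induction_on with
  | C a => rw [derivative_C, map_zero]; exact D_const φ D hDadd hDmul hDc a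
  | add p q hp hq => rw [map_add, hDadd, hp, hq, derivative_add, map_add]
  | monomial n a ih =>
    have hXp : psiB g m L φ (C a * X ^ (n+1)) = psiB g m L φ (C a * X ^ n) * φ X := by
      rw [pow_succ, ← mul_assoc, map_mul, psiB_X]
    rw [hXp, hDmul, hDx, mul_one, ih]
    have hder : derivative (C a * X ^ (n+1))
        = C a * X ^ n + derivative (C a * X ^ n) * X := by
      cases n with
      | zero => simp
      | succ k =>
        rw [derivative_C_mul, derivative_C_mul, derivative_X_pow, derivative_X_pow]
        push_cast
        simp only [map_add, map_natCast, map_one, map_ofNat]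
        ring
    rw [hder, map_add]
    simp only [map_mul, psiB_X]

include hind in
lemma w_ne : 2 * (y + φ (qB g m) / 2) ≠ 0 := by
  intro h
  have h0 : (2:L) * y + φ (qB g m) = 0 := by linear_combination h
  have hC2 : φ (C 2 : Polynomial (BRing g m)) = 2 := by
    rw [map_ofNat, map_ofNat]
  have h2 : φ (C 2 : Polynomial (BRing g m)) * y = φ (- qB g m) := by
    rw [hC2, map_neg]
    linear_combination h0
  have := hind (- qB g m) (C 2) h2
  have h3 : (2 : BRing g m) = 0 := Polynomial.C_eq_zero.mp (by exact_mod_cast this)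
  norm_num at h3

include hy in
lemma z_sq : (y + φ (qB g m) / 2) ^ 2 = psiB g m L φ (fBQ g m) := by
  have hf : fBQ g m = toQ g m (pB g m) + C (MvPolynomial.C ((4:ℚ)⁻¹)) * (toQ g m (qB g m))^2 := by
    rw [toQ_pB, toQ_qB]; rfl
  have hψf : psiB g m L φ (fBQ g m) = φ (pB g m) + ((4:ℚ):L)⁻¹ * (φ (qB g m))^2 := by
    rw [hf, map_add, map_mul, map_pow, psiB_toQ, psiB_toQ, psiB_CC, Rat.cast_inv]
  rw [hψf]
  have h4 : ((4:ℚ):L) = 4 := by norm_num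
  rw [h4]
  linear_combination hy

include hy hind hDadd hDmul hDx hDc in
lemma claimA : ∀ n : ℕ, D^[n] (φ (PsiB g m) * (y + φ (qB g m) / 2))
    = psiB g m L φ (S g m n) * (2 * (y + φ (qB g m) / 2)) ^ (1 - 2*(n:ℤ)) := by
  set ζ := y + φ (qB g m) / 2 with hζ
  set w := 2 * ζ with hwdef
  have hw : w ≠ 0 := w_ne φ y hind
  have hDw : w * D w = 2 * psiB g m L φ (derivative (fBQ g m)) := by
    have hD2 : D (2:L) = 0 := by
      have : (2:L) = ((2:ℕ):L) := by norm_num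
      rw [this]; exact D_nat D hDadd hDmul 2
    have hζ2 : D (ζ^2) = psiB g m L φ (derivative (fBQ g m)) := by
      rw [z_sq φ y hy, D_psiB φ D hDadd hDmul hDx hDc]
    have hζζ : D (ζ^2) = 2 * (ζ * D ζ) := by
      rw [pow_two, hDmul]; ring
    rw [hwdef, hDmul, hD2]
    linear_combination 2 * hζ2 - 2 * hζζ
  intro n
  induction n with
  | zero =>
    simp only [Function.iterate_zero, id_eq, Nat.cast_zero, mul_zero, sub_zero, zpow_one]
    show φ (PsiB g m) * ζ = psiB g m L φ (S g m 0) * w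
    rw [show S g m 0 = C (MvPolynomial.C (2⁻¹ : ℚ)) * toQ g m (PsiB g m) from rfl,
      map_mul, psiB_CC, psiB_toQ, hwdef]
    push_cast
    ring
  | succ n ih =>
    rw [Function.iterate_succ_apply', ih]
    set e : ℤ := 1 - 2*(n:ℤ) with he
    have hDwe : D ((2 * ζ) ^ e) = e * w ^ (e-1) * D w := D_zpow D hDadd hDmul w hw e
    rw [hDmul, hDwe, D_psiB φ D hDadd hDmul hDx hDc]
    set u := w ^ (e-2) with hu
    have hsplit1 : w ^ (e-1) = u * w := by
      rw [hu, show e-1 = (e-2)+1 by ring, zpow_add₀ hw, zpow_one]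
    have hsplit : w ^ e = u * w^2 := by
      rw [hu, ← zpow_natCast w 2, ← zpow_add₀ hw]
      congr 1
      push_cast
      ring
    have hw2 : (w:L)^2 = 4 * psiB g m L φ (fBQ g m) := by
      rw [hwdef, ← z_sq φ y hy]; ring
    have hexp : (1 : ℤ) - 2*((n+1 : ℕ):ℤ) = e - 2 := by push_cast [he]; ring
    have hel : ((e:ℤ):L) = 1 - 2*(n:L) := by rw [he]; push_cast; ring
    have hSn1 : psiB g m L φ (S g m (n+1))
        = 4 * psiB g m L φ (fBQ g m) * psiB g m L φ (derivative (S g m n))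
          + (2 * (1 - 2*(n:L))) * psiB g m L φ (derivative (fBQ g m)) * psiB g m L φ (S g m n) := by
      rw [show S g m (n+1) = C (MvPolynomial.C (4 : ℚ)) * fBQ g m * derivative (S g m n)
        + C (MvPolynomial.C ((2 : ℚ) * (1 - 2*(n:ℚ)))) * derivative (fBQ g m) * S g m n from rfl]
      simp only [map_add, map_mul, psiB_CC]
      push_cast
      ring
    rw [hexp, hSn1, hsplit1, hsplit]
    linear_combination ((e:L) * u * psiB g m L φ (S g m n)) * hDw
      + (u * psiB g m L φ (derivative (S g m n))) * hw2
      + (2 * u * psiB g m L φ (S g m n) * psiB g m L φ (derivative (fBQ g m))) * hel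

include hy hind hDadd hDmul hDx hDc in
lemma rtB_eq (n : ℕ) : rtB g m L φ y D n = psiB g m L φ (S g m n) := by
  rw [rtB, claimA φ y D hy hind hDadd hDmul hDx hDc n]
  set w := 2 * (y + φ (qB g m) / 2) with hwdef
  have hw : w ≠ 0 := w_ne φ y hind
  have h0 : w ^ (2*(n:ℤ) - 1) * w ^ (1 - 2*(n:ℤ)) = 1 := by
    rw [← zpow_add₀ hw]
    norm_num
  calc w ^ (2*(n:ℤ) - 1) * (psiB g m L φ (S g m n) * w ^ (1 - 2*(n:ℤ)))
      = psiB g m L φ (S g m n) * (w ^ (2*(n:ℤ) - 1) * w ^ (1 - 2*(n:ℤ))) := by ring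
    _ = psiB g m L φ (S g m n) := by rw [h0, mul_one]

end Main

section Degree

lemma coeff_finsum {R : Type*} [CommRing R] (k : ℕ) (c : Fin k → R) (j : ℕ) :
    (∑ i : Fin k, C (c i) * X ^ (i:ℕ)).coeff j = if h : j < k then c ⟨j, h⟩ else 0 := by
  rw [Polynomial.finset_sum_coeff]
  simp only [coeff_C_mul, coeff_X_pow]
  split
  next h =>
    rw [Finset.sum_eq_single (⟨j, h⟩ : Fin k)]
    · simp
    · intro b _ hb
      have hne : j ≠ (b : ℕ) := fun hbj => hb (by ext; exact hbj.symm)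
      simp [hne]
    · simp
  next h =>
    apply Finset.sum_eq_zero
    intro i _
    have hne : j ≠ (i : ℕ) := by omega
    simp [hne]

lemma finsum_nd {R : Type*} [CommRing R] (k : ℕ) (c : Fin (k+1) → R) :
    (∑ i : Fin (k+1), C (c i) * X ^ (i:ℕ)).natDegree ≤ k := by
  rw [Polynomial.natDegree_le_iff_coeff_eq_zero]
  intro j hj
  rw [coeff_finsum]
  have : ¬ j < k+1 := by omega
  simp [this]

lemma qBQ_nd (g m : ℕ) : (qBQ g m).natDegree ≤ g := finsum_nd g _

lemma fBQ_coeff_hi (g m : ℕ) (j : ℕ) (hj : 2*g+1 < j) : (fBQ g m).coeff j = 0 := by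
  rw [fBQ, coeff_add, coeff_C_mul]
  have h1 : (pBQ g m).coeff j = 0 := by
    rw [pBQ, coeff_add, coeff_X_pow, coeff_finsum]
    have h2 : ¬ (j = 2*g+1) := by omega
    have h3 : ¬ j < 2*g+1 := by omega
    simp [h2, h3]
  have h2 : ((qBQ g m)^2).coeff j = 0 := by
    apply coeff_eq_zero_of_natDegree_lt
    calc ((qBQ g m)^2).natDegree ≤ 2 * (qBQ g m).natDegree := natDegree_pow_le
      _ ≤ 2 * g := by have := qBQ_nd g m; omega
      _ < j := by omega
  rw [h1, h2, mul_zero, add_zero]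

lemma fBQ_nd (g m : ℕ) : (fBQ g m).natDegree ≤ 2*g+1 := by
  rw [Polynomial.natDegree_le_iff_coeff_eq_zero]
  intro j hj
  exact fBQ_coeff_hi g m j (by exact_mod_cast hj)

lemma fBQ_top (g m : ℕ) : (fBQ g m).coeff (2*g+1) = 1 := by
  rw [fBQ, coeff_add, coeff_C_mul]
  have h1 : (pBQ g m).coeff (2*g+1) = 1 := by
    rw [pBQ, coeff_add, coeff_X_pow, coeff_finsum]
    simp
  have h2 : ((qBQ g m)^2).coeff (2*g+1) = 0 := by
    apply coeff_eq_zero_of_natDegree_lt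
    calc ((qBQ g m)^2).natDegree ≤ 2 * (qBQ g m).natDegree := natDegree_pow_le
      _ ≤ 2 * g := by have := qBQ_nd g m; omega
      _ < 2*g+1 := by omega
  rw [h1, h2, mul_zero, add_zero]

lemma fBQ'_nd (g m : ℕ) : (derivative (fBQ g m)).natDegree ≤ 2*g := by
  calc (derivative (fBQ g m)).natDegree ≤ (fBQ g m).natDegree - 1 := natDegree_derivative_le _
    _ ≤ 2*g := by have := fBQ_nd g m; omega

lemma fBQ'_top (g m : ℕ) : (derivative (fBQ g m)).coeff (2*g) = ((2*g+1 : ℕ) : BQ g m) := by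
  rw [coeff_derivative, fBQ_top, one_mul]
  push_cast
  ring

/-- the leading coefficient -/
def lc (g m : ℕ) (n : ℕ) : BQ g m :=
  MvPolynomial.C ((2:ℚ)^((n:ℤ)-1) * (CcB (2*(g:ℤ)+2*(m:ℤ)+1) n : ℚ))
    * MvPolynomial.X (Sum.inr (Fin.last m))

lemma CcB_ne (g m : ℕ) (n : ℕ) : CcB (2*(g:ℤ)+2*(m:ℤ)+1) n ≠ 0 := by
  rw [CcB]
  apply Finset.prod_ne_zero_iff.mpr
  intro r _
  omega

lemma lc_ne (g m : ℕ) (n : ℕ) : lc g m n ≠ 0 := by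
  rw [lc]
  apply mul_ne_zero
  · rw [Ne, MvPolynomial.C_eq_zero]
    apply mul_ne_zero
    · exact zpow_ne_zero _ (by norm_num : (2:ℚ) ≠ 0)
    · exact_mod_cast CcB_ne g m n
  · exact MvPolynomial.X_ne_zero (R := ℚ) (σ := VarsB g m) _

lemma CcB_succ (M : ℤ) (n : ℕ) : CcB M (n+1) = CcB M n * (M - 2*(n:ℤ)) := by
  rw [CcB, CcB, Finset.prod_range_succ]

lemma lc_succ (g m : ℕ) (n : ℕ) :
    (4 * ((2*g*n+m : ℕ) : ℚ) + (2 * (1 - 2*(n:ℚ))) * ((2*g+1 : ℕ) : ℚ))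
      * ((2:ℚ)^((n:ℤ)-1) * (CcB (2*(g:ℤ)+2*(m:ℤ)+1) n : ℚ))
    = (2:ℚ)^(((n+1:ℕ):ℤ)-1) * (CcB (2*(g:ℤ)+2*(m:ℤ)+1) (n+1) : ℚ) := by
  rw [CcB_succ]
  have h2 : (2:ℚ)^(((n+1:ℕ):ℤ)-1) = 2 * (2:ℚ)^((n:ℤ)-1) := by
    rw [show (((n+1:ℕ):ℤ)-1) = ((n:ℤ)-1) + 1 by push_cast; ring, zpow_add_one₀ (two_ne_zero)]
    ring
  rw [h2]
  push_cast
  ring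

lemma S_deg (g m : ℕ) (hg : 1 ≤ g) :
    ∀ n, (S g m n).natDegree ≤ 2*g*n+m ∧ (S g m n).coeff (2*g*n+m) = lc g m n := by
  intro n
  induction n with
  | zero =>
    rw [show S g m 0 = C (MvPolynomial.C (2⁻¹ : ℚ)) * toQ g m (PsiB g m) from rfl, toQ_PsiB]
    constructor
    · have h1 := natDegree_mul_le (p := (C (MvPolynomial.C (2⁻¹ : ℚ)) : Polynomial (BQ g m)))
        (q := (∑ i : Fin (m+1), C (MvPolynomial.X (Sum.inr i)) * X ^ (i:ℕ) : Polynomial (BQ g m)))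
      have h2 := finsum_nd m (fun i : Fin (m+1) => (MvPolynomial.X (Sum.inr i) : BQ g m))
      rw [natDegree_C] at h1
      omega
    · rw [coeff_C_mul, coeff_finsum]
      have hm : 2*g*0+m < m+1 := by omega
      rw [dif_pos hm, lc]
      have hlast : (⟨2*g*0+m, hm⟩ : Fin (m+1)) = Fin.last m := by
        ext; simp
      rw [hlast]
      congr 1
      rw [show ((0:ℕ):ℤ)-1 = -1 by norm_num, zpow_neg_one, CcB]
      norm_num
  | succ n ih =>
    obtain ⟨h1, h2⟩ := ih
    have hf := fBQ_nd g m
    have hf' := fBQ'_nd g m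
    have hstep : MvPolynomial.C ((4:ℚ) * ((2*g*n+m : ℕ) : ℚ)
          + (2 * (1 - 2*(n:ℚ))) * ((2*g+1 : ℕ) : ℚ)) * lc g m n = lc g m (n+1) := by
      simp only [lc]
      rw [← mul_assoc, ← MvPolynomial.C_mul]
      congr 2
      linear_combination lc_succ g m n
    have hidx : 2*g*(n+1)+m = (2*g*n+m) + 2*g := by ring
    rw [show S g m (n+1) = C (MvPolynomial.C (4 : ℚ)) * fBQ g m * derivative (S g m n)
      + C (MvPolynomial.C ((2 : ℚ) * (1 - 2*(n:ℚ)))) * derivative (fBQ g m) * S g m n from rfl]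
    have hndB : (C (MvPolynomial.C ((2 : ℚ) * (1 - 2*(n:ℚ)))) * derivative (fBQ g m)
        * S g m n).natDegree ≤ 2*g*(n+1)+m := by
      have b1 := natDegree_mul_le (p := C (MvPolynomial.C ((2 : ℚ) * (1 - 2*(n:ℚ))))
        * derivative (fBQ g m)) (q := S g m n)
      have b2 := natDegree_mul_le (p := (C (MvPolynomial.C ((2 : ℚ) * (1 - 2*(n:ℚ))))
        : Polynomial (BQ g m))) (q := derivative (fBQ g m))
      have b3 : ((C (MvPolynomial.C ((2 : ℚ) * (1 - 2*(n:ℚ))))) : Polynomial (BQ g m)).natDegree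
        = 0 := natDegree_C _
      rw [hidx]
      omega
    have hBnd2 : (C (MvPolynomial.C ((2 : ℚ) * (1 - 2*(n:ℚ)))) * derivative (fBQ g m)
        : Polynomial (BQ g m)).natDegree ≤ 2*g := by
      have b2 := natDegree_mul_le (p := (C (MvPolynomial.C ((2 : ℚ) * (1 - 2*(n:ℚ))))
        : Polynomial (BQ g m))) (q := derivative (fBQ g m))
      have b3 : ((C (MvPolynomial.C ((2 : ℚ) * (1 - 2*(n:ℚ))))) : Polynomial (BQ g m)).natDegree
        = 0 := natDegree_C _
      omega
    have hAnd2 : (C (MvPolynomial.C (4:ℚ)) * fBQ g m : Polynomial (BQ g m)).natDegree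
        ≤ 2*g+1 := by
      have b2 := natDegree_mul_le (p := (C (MvPolynomial.C (4:ℚ)) : Polynomial (BQ g m)))
        (q := fBQ g m)
      have b3 : ((C (MvPolynomial.C (4:ℚ))) : Polynomial (BQ g m)).natDegree = 0 := natDegree_C _
      omega
    have hcg : ((2*g+1 : ℕ) : BQ g m) = MvPolynomial.C (((2*g+1 : ℕ) : ℚ)) :=
      (MvPolynomial.C_eq_coe_nat _).symm
    have hBco : (C (MvPolynomial.C ((2 : ℚ) * (1 - 2*(n:ℚ)))) * derivative (fBQ g m)
        * S g m n).coeff (2*g + (2*g*n+m))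
        = MvPolynomial.C (((2 : ℚ) * (1 - 2*(n:ℚ))) * ((2*g+1 : ℕ) : ℚ)) * lc g m n := by
      rw [coeff_mul_add_eq_of_natDegree_le hBnd2 h1, coeff_C_mul, fBQ'_top, h2, hcg]
      simp only [MvPolynomial.C_mul]
    cases hd : 2*g*n+m with
    | zero =>
      have hS0 : S g m n = C ((S g m n).coeff 0) := eq_C_of_natDegree_le_zero (by omega)
      have hder : derivative (S g m n) = 0 := by rw [hS0]; exact derivative_C
      have hn : n = 0 := by
        by_contra hne
        have : 1 ≤ n := by omega
        nlinarith [hd]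
      have hm : m = 0 := by omega
      constructor
      · refine le_trans (natDegree_add_le _ _) (max_le ?_ hndB)
        rw [hder, mul_zero]
        simp
      · rw [coeff_add, hder, mul_zero, coeff_zero, zero_add]
        have hidx2 : 2*g*(n+1)+m = 2*g + (2*g*n+m) := by rw [hidx]; omega
        rw [hidx2, hBco, ← hstep, hd]
        congr 2
        push_cast
        ring
    | succ e =>
      have hSd : (derivative (S g m n)).natDegree ≤ e := by
        have b4 : (derivative (S g m n)).natDegree ≤ (S g m n).natDegree - 1 :=
          natDegree_derivative_le _
        omega
      constructor
      · refine le_trans (natDegree_add_le _ _) (max_le ?_ hndB)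
        have b1 := natDegree_mul_le (p := C (MvPolynomial.C (4:ℚ)) * fBQ g m)
          (q := derivative (S g m n))
        rw [hidx, hd]
        omega
      · rw [coeff_add]
        have hidxA : 2*g*(n+1)+m = (2*g+1) + e := by rw [hidx]; omega
        have hidxB : 2*g*(n+1)+m = 2*g + (2*g*n+m) := by rw [hidx]; omega
        rw [hd] at h2
        have hc : ((e : BQ g m) + 1) = MvPolynomial.C ((e:ℚ)+1) := by
          rw [MvPolynomial.C_add, MvPolynomial.C_eq_coe_nat, MvPolynomial.C_1]
        have hA : (C (MvPolynomial.C (4:ℚ)) * fBQ g m * derivative (S g m n)).coeff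
            ((2*g+1) + e)
            = MvPolynomial.C ((4:ℚ) * ((e:ℚ)+1)) * lc g m n := by
          rw [coeff_mul_add_eq_of_natDegree_le hAnd2 hSd, coeff_C_mul, fBQ_top, coeff_derivative, h2,
            hc]
          simp only [MvPolynomial.C_mul]
          ring
        rw [hidxB, hBco, ← hidxB, hidxA, hA, ← hstep, hd, ← add_mul, ← MvPolynomial.C_add]
        congr 2
        push_cast
        ring


end Degree

end Stmt16Aux

/-- r̃_{Ψ,n}, viewed as a polynomial in x over B⊗ℚ, has degree exactly
2gn+m and leading coefficient 2^{n−1}·b_m·C_{2g+2m+1,n}. -/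
theorem stmt16 (g m : ℕ) (hg : 1 ≤ g)
    (L : Type) [Field L] [CharZero L]
    (φ : Polynomial (BRing g m) →+* L) (y : L) (D : L → L)
    (hinj : Function.Injective φ)
    (hy : y ^ 2 + φ (qB g m) * y = φ (pB g m))
    (hind : ∀ u v : Polynomial (BRing g m), φ v * y = φ u → v = 0)
    (hDadd : ∀ a b : L, D (a + b) = D a + D b)
    (hDmul : ∀ a b : L, D (a * b) = a * D b + D a * b)
    (hDx : D (φ X) = 1)
    (hDc : ∀ c : BRing g m, D (φ (C c)) = 0) :
    ∀ (rp : Polynomial (BQ g m)) (n : ℕ), psiB g m L φ rp = rtB g m L φ y D n →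
      rp.degree = ((2*g*n + m : ℕ) : WithBot ℕ) ∧
      rp.leadingCoeff
        = MvPolynomial.C ((2:ℚ)^((n:ℤ)-1) * (CcB (2*(g:ℤ)+2*(m:ℤ)+1) n : ℚ))
          * MvPolynomial.X (Sum.inr (Fin.last m)) := by
  intro rp n h
  have hrt := Stmt16Aux.rtB_eq φ y D hy hind hDadd hDmul hDx hDc n
  have hrp : rp = Stmt16Aux.S g m n := by
    apply Stmt16Aux.psiB_inj g m φ hinj
    rw [h, hrt]
  obtain ⟨h1, h2⟩ := Stmt16Aux.S_deg g m hg n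
  have hne : (Stmt16Aux.S g m n).coeff (2*g*n+m) ≠ 0 := by
    rw [h2]; exact Stmt16Aux.lc_ne g m n
  have hdeg : (Stmt16Aux.S g m n).degree = ((2*g*n+m : ℕ) : WithBot ℕ) := by
    apply le_antisymm
    · exact Polynomial.natDegree_le_iff_degree_le.mp h1
    · exact Polynomial.le_degree_of_ne_zero hne
  have hnat : (Stmt16Aux.S g m n).natDegree = 2*g*n+m :=
    Polynomial.natDegree_eq_of_degree_eq_some hdeg
  constructor
  · rw [hrp]; exact hdeg
  · rw [hrp, Polynomial.leadingCoeff, hnat, h2]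
    simp only [Stmt16Aux.lc]
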